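/- Let A be a set of letters, Γℓ and Γr two disjoint finite subsets of A, and c : Γℓ × Γr → A an injective map whose values lie outside Γℓ ∪ Γr. Let u, v ∈ A* and suppose that u is empty, or v is empty, or the last letter of u is not in Γℓ, or the first letter of v is not in Γr. Then PC(u·v) = PC(u)·PC(v). -/

import Mathlib

/-- The (Γℓ,Γr)-pair compression of a word: every occurrence of a two-letter
factor `a b` with `a ∈ Gl` and `b ∈ Gr` is replaced by the single letter `c a b`,
proceeding from left to right. -/
def PC {A : Type*} [DecidableEq A] (Gl Gr : Finset A) (c : A → A → A) : List A → List A
  | [] => []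
  | [a] => [a]
  | a :: b :: w =>
    if a ∈ Gl ∧ b ∈ Gr then c a b :: PC Gl Gr c w
    else a :: PC Gl Gr c (b :: w)

/-- pair compression distributes over a concatenation `u ++ v` provided
`u` is empty, or `v` is empty, or the last letter of `u` is not in `Gl`, or the first
letter of `v` is not in `Gr`. -/
theorem stmt5 {A : Type*} [DecidableEq A] (Gl Gr : Finset A) (hdisj : Disjoint Gl Gr)
    (c : A → A → A)
    (hc_fresh : ∀ a ∈ Gl, ∀ b ∈ Gr, c a b ∉ Gl ∪ Gr)
    (hc_inj : ∀ a ∈ Gl, ∀ b ∈ Gr, ∀ a' ∈ Gl, ∀ b' ∈ Gr,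
      c a b = c a' b' → a = a' ∧ b = b')
    (u v : List A)
    (h : u = [] ∨ v = [] ∨ (∃ a, u.getLast? = some a ∧ a ∉ Gl) ∨
      (∃ b, v.head? = some b ∧ b ∉ Gr)) :
    PC Gl Gr c (u ++ v) = PC Gl Gr c u ++ PC Gl Gr c v := by
  induction u using PC.induct Gl Gr with
  | case1 => simp [PC]
  | case2 a =>
    rcases h with h | h | ⟨x, hx, hxGl⟩ | ⟨b, hb, hbGr⟩
    · simp at h
    · simp [h, PC]
    · simp at hx; subst hx
      cases v with
      | nil => simp [PC]
      | cons b v' => simp [PC, hxGl]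
    · cases v with
      | nil => simp [PC]
      | cons b' v' =>
        simp at hb; subst hb
        have : ¬(a ∈ Gl ∧ b' ∈ Gr) := fun ⟨_, h2⟩ => hbGr h2
        simp [PC, this]
  | case3 a b w hab ih =>
    have h' : w = [] ∨ v = [] ∨ (∃ x, w.getLast? = some x ∧ x ∉ Gl) ∨
        (∃ x, v.head? = some x ∧ x ∉ Gr) := by
      rcases h with h | h | ⟨x, hx, hxGl⟩ | h
      · simp at h
      · exact Or.inr (Or.inl h)
      · cases w with
        | nil => exact Or.inl rfl
        | cons y w' =>
          refine Or.inr (Or.inr (Or.inl ⟨x, ?_, hxGl⟩))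
          simpa [List.getLast?_cons_cons] using hx
      · exact Or.inr (Or.inr (Or.inr h))
    simp only [List.cons_append, PC, if_pos hab, List.append_eq, ih h']
  | case4 a b w hab ih =>
    have h' : (b :: w) = [] ∨ v = [] ∨ (∃ x, (b :: w).getLast? = some x ∧ x ∉ Gl) ∨
        (∃ x, v.head? = some x ∧ x ∉ Gr) := by
      rcases h with h | h | ⟨x, hx, hxGl⟩ | h
      · simp at h
      · exact Or.inr (Or.inl h)
      · refine Or.inr (Or.inr (Or.inl ⟨x, ?_, hxGl⟩))
        simpa [List.getLast?_cons_cons] using hx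
      · exact Or.inr (Or.inr (Or.inr h))
    simp only [List.cons_append, PC, if_neg hab]
    rw [show (b :: w) ++ v = (b :: w) ++ v from rfl] at *
    simpa using ih h'
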